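/- Let D be a finite digraph whose arc set is partitioned into two sets A1 and A2 such that the only vertices incident both with an arc of A1 and with an arc of A2 are two vertices u and v, and such that no arc of A2 has tail u or tail v (i.e., u and v have out-degree 0 in A2). Let D1 and D2 be the spanning sub-digraphs of D with arc sets A1 and A2 respectively. Then |EE(D)| − |OE(D)| = (|EE(D1)| − |OE(D1)|) · (|EE(D2)| − |OE(D2)|). -/

import Mathlib

open Finset

/-- `H` is a spanning Eulerian sub-digraph of the digraph with arc set `A`: a subset of
the arcs in which every vertex has equal in-degree and out-degree. -/
def IsEulerianSub {V : Type*} [DecidableEq V] (A H : Finset (V × V)) : Prop :=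
  H ⊆ A ∧ ∀ v : V, (H.filter fun p => p.1 = v).card = (H.filter fun p => p.2 = v).card

/-- The set of spanning Eulerian sub-digraphs of the digraph with arc set `A` having an
even number of arcs. -/
def EE {V : Type*} [DecidableEq V] [Fintype V] (A : Finset (V × V)) :
    Finset (Finset (V × V)) :=
  A.powerset.filter fun H =>
    (∀ v : V, (H.filter fun p => p.1 = v).card = (H.filter fun p => p.2 = v).card) ∧
      Even H.card

/-- The set of spanning Eulerian sub-digraphs of the digraph with arc set `A` having an
odd number of arcs. -/
def OE {V : Type*} [DecidableEq V] [Fintype V] (A : Finset (V × V)) :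
    Finset (Finset (V × V)) :=
  A.powerset.filter fun H =>
    (∀ v : V, (H.filter fun p => p.1 = v).card = (H.filter fun p => p.2 = v).card) ∧
      Odd H.card

section Aux

variable {V : Type*} [DecidableEq V] [Fintype V]

/-- The Eulerian degree condition. -/
def Eul (H : Finset (V × V)) : Prop :=
  ∀ w : V, (H.filter fun p => p.1 = w).card = (H.filter fun p => p.2 = w).card

instance (H : Finset (V × V)) : Decidable (Eul H) := by
  unfold Eul; infer_instance

/-- Signed indicator. -/
def fE (H : Finset (V × V)) : ℤ :=
  if Eul H then (-1) ^ H.card else 0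

lemma sub_eq_sum (A : Finset (V × V)) :
    ((EE A).card : ℤ) - ((OE A).card : ℤ) = ∑ H ∈ A.powerset, fE H := by
  rw [EE, OE, Finset.card_filter, Finset.card_filter]
  push_cast
  rw [← Finset.sum_sub_distrib]
  refine Finset.sum_congr rfl fun H _ => ?_
  unfold fE Eul
  by_cases hE : ∀ w : V, (H.filter fun p => p.1 = w).card = (H.filter fun p => p.2 = w).card
  · by_cases hp : Even H.card
    · simp [hE, hp, ← Nat.not_even_iff_odd, Even.neg_one_pow hp]
    · simp [hE, hp, ← Nat.not_even_iff_odd, (Nat.not_even_iff_odd.mp hp).neg_one_pow]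
  · simp [hE]

lemma sum_out (H : Finset (V × V)) :
    ∑ w : V, (H.filter fun p => p.1 = w).card = H.card :=
  (Finset.card_eq_sum_card_fiberwise (f := Prod.fst) (t := Finset.univ)
    (fun x _ => Finset.mem_univ _)).symm

lemma sum_in (H : Finset (V × V)) :
    ∑ w : V, (H.filter fun p => p.2 = w).card = H.card :=
  (Finset.card_eq_sum_card_fiberwise (f := Prod.snd) (t := Finset.univ)
    (fun x _ => Finset.mem_univ _)).symm

end Aux

theorem statement12 {V : Type*} [DecidableEq V] [Fintype V]
    (A1 A2 : Finset (V × V)) (u v : V)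
    (hdisj : Disjoint A1 A2)
    (hsep : ∀ w : V, (∃ p ∈ A1, p.1 = w ∨ p.2 = w) → (∃ q ∈ A2, q.1 = w ∨ q.2 = w) →
      w = u ∨ w = v)
    (htail : ∀ q ∈ A2, q.1 ≠ u ∧ q.1 ≠ v) :
    ((EE (A1 ∪ A2)).card : ℤ) - ((OE (A1 ∪ A2)).card : ℤ) =
      (((EE A1).card : ℤ) - ((OE A1).card : ℤ)) *
        (((EE A2).card : ℤ) - ((OE A2).card : ℤ)) := by
  classical
  -- notation for degrees
  set o : Finset (V × V) → V → ℕ := fun S w => (S.filter fun p => p.1 = w).card with ho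
  set i : Finset (V × V) → V → ℕ := fun S w => (S.filter fun p => p.2 = w).card with hi
  -- key splitting lemma
  have key : ∀ H1 ∈ A1.powerset, ∀ H2 ∈ A2.powerset, fE (H1 ∪ H2) = fE H1 * fE H2 := by
    intro H1 h1 H2 h2
    rw [Finset.mem_powerset] at h1 h2
    have hd : Disjoint H1 H2 := hdisj.mono h1 h2
    have hcard : (H1 ∪ H2).card = H1.card + H2.card := Finset.card_union_of_disjoint hd
    have hodeg : ∀ w, o (H1 ∪ H2) w = o H1 w + o H2 w := by
      intro w
      simp only [ho, Finset.filter_union]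
      exact Finset.card_union_of_disjoint (hd.mono (Finset.filter_subset _ _) (Finset.filter_subset _ _))
    have hideg : ∀ w, i (H1 ∪ H2) w = i H1 w + i H2 w := by
      intro w
      simp only [hi, Finset.filter_union]
      exact Finset.card_union_of_disjoint (hd.mono (Finset.filter_subset _ _) (Finset.filter_subset _ _))
    have hiff : Eul (H1 ∪ H2) ↔ Eul H1 ∧ Eul H2 := by
      constructor
      · intro hE
        -- for w ∉ {u,v}, degrees separate
        have hsepdeg : ∀ w, w ≠ u → w ≠ v →
            (o H1 w = i H1 w ∧ o H2 w = i H2 w) := by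
          intro w hwu hwv
          by_cases h2touch : ∃ q ∈ A2, q.1 = w ∨ q.2 = w
          · -- then w touches no A1 arc
            have h1not : ¬ ∃ p ∈ A1, p.1 = w ∨ p.2 = w := by
              intro h1touch
              rcases hsep w h1touch h2touch with h | h
              · exact hwu h
              · exact hwv h
            have ho1 : o H1 w = 0 := by
              simp only [ho, Finset.card_eq_zero, Finset.filter_eq_empty_iff]
              intro p hp hpw
              exact h1not ⟨p, h1 hp, Or.inl hpw⟩
            have hi1 : i H1 w = 0 := by
              simp only [hi, Finset.card_eq_zero, Finset.filter_eq_empty_iff]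
              intro p hp hpw
              exact h1not ⟨p, h1 hp, Or.inr hpw⟩
            have := hE w
            have h' : o (H1 ∪ H2) w = i (H1 ∪ H2) w := this
            rw [hodeg, hideg, ho1, hi1] at h'
            exact ⟨by rw [ho1, hi1], by omega⟩
          · have ho2 : o H2 w = 0 := by
              simp only [ho, Finset.card_eq_zero, Finset.filter_eq_empty_iff]
              intro p hp hpw
              exact h2touch ⟨p, h2 hp, Or.inl hpw⟩
            have hi2 : i H2 w = 0 := by
              simp only [hi, Finset.card_eq_zero, Finset.filter_eq_empty_iff]
              intro p hp hpw
              exact h2touch ⟨p, h2 hp, Or.inr hpw⟩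
            have h' : o (H1 ∪ H2) w = i (H1 ∪ H2) w := hE w
            rw [hodeg, hideg, ho2, hi2] at h'
            exact ⟨by omega, by rw [ho2, hi2]⟩
        -- out-degrees of u, v in H2 are zero
        have hou : o H2 u = 0 := by
          simp only [ho, Finset.card_eq_zero, Finset.filter_eq_empty_iff]
          intro p hp hpw
          exact (htail p (h2 hp)).1 hpw
        have hov : o H2 v = 0 := by
          simp only [ho, Finset.card_eq_zero, Finset.filter_eq_empty_iff]
          intro p hp hpw
          exact (htail p (h2 hp)).2 hpw
        -- sum argument: in-degrees of u, v in H2 are zero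
        have hsum : ∑ w : V, ((i H2 w : ℤ) - (o H2 w : ℤ)) = 0 := by
          rw [Finset.sum_sub_distrib, ← Nat.cast_sum, ← Nat.cast_sum, sum_in, sum_out,
            sub_self]
        have hsub : ∑ w ∈ ({u, v} : Finset V), ((i H2 w : ℤ) - (o H2 w : ℤ)) = 0 := by
          rw [← hsum]
          refine Finset.sum_subset (Finset.subset_univ _) fun w _ hw => ?_
          simp only [Finset.mem_insert, Finset.mem_singleton, not_or] at hw
          have := (hsepdeg w hw.1 hw.2).2
          omega
        have hiu : i H2 u = 0 ∧ i H2 v = 0 := by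
          by_cases huv : u = v
          · subst huv
            simp only [Finset.insert_eq_self.mpr (Finset.mem_singleton_self u),
              Finset.sum_singleton] at hsub
            rw [hou] at hsub
            constructor <;> omega
          · rw [Finset.sum_pair huv, hou, hov] at hsub
            constructor <;> omega
        have hE2 : Eul H2 := by
          intro w
          by_cases hwu : w = u
          · subst hwu; show o H2 w = i H2 w; omega
          by_cases hwv : w = v
          · subst hwv; show o H2 w = i H2 w; omega
          exact (hsepdeg w hwu hwv).2
        have hE1 : Eul H1 := by
          intro w
          have h' : o (H1 ∪ H2) w = i (H1 ∪ H2) w := hE w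
          have h2' : o H2 w = i H2 w := hE2 w
          rw [hodeg, hideg] at h'
          show o H1 w = i H1 w
          omega
        exact ⟨hE1, hE2⟩
      · rintro ⟨hE1, hE2⟩ w
        have h1' : o H1 w = i H1 w := hE1 w
        have h2' : o H2 w = i H2 w := hE2 w
        show o (H1 ∪ H2) w = i (H1 ∪ H2) w
        rw [hodeg, hideg, h1', h2']
    -- conclude
    unfold fE
    by_cases hh : Eul H1 ∧ Eul H2
    · rw [if_pos (hiff.mpr hh), if_pos hh.1, if_pos hh.2, hcard, pow_add]
    · rw [if_neg (fun h => hh (hiff.mp h))]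
      rcases not_and_or.mp hh with h | h
      · rw [if_neg h, zero_mul]
      · rw [if_neg h, mul_zero]
  -- now the summation argument
  rw [sub_eq_sum, sub_eq_sum, sub_eq_sum, Finset.sum_mul_sum]
  rw [← Finset.sum_product']
  refine Finset.sum_nbij' (fun H => (H ∩ A1, H ∩ A2)) (fun p => p.1 ∪ p.2) ?_ ?_ ?_ ?_ ?_
  · intro H hH
    rw [Finset.mem_powerset] at hH
    simp only [Finset.mem_product, Finset.mem_powerset]
    exact ⟨Finset.inter_subset_right, Finset.inter_subset_right⟩
  · intro p hp
    simp only [Finset.mem_product, Finset.mem_powerset] at hp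
    rw [Finset.mem_powerset]
    exact Finset.union_subset_union hp.1 hp.2
  · intro H hH
    rw [Finset.mem_powerset] at hH
    show (H ∩ A1) ∪ (H ∩ A2) = H
    rw [← Finset.inter_union_distrib_left]
    exact Finset.inter_eq_left.mpr hH
  · intro p hp
    simp only [Finset.mem_product, Finset.mem_powerset] at hp
    have h1 : p.1 ∩ A1 = p.1 := Finset.inter_eq_left.mpr hp.1
    have h2 : p.2 ∩ A2 = p.2 := Finset.inter_eq_left.mpr hp.2
    have h12 : p.2 ∩ A1 = ∅ := by
      rw [← Finset.disjoint_iff_inter_eq_empty]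
      exact (hdisj.symm.mono_left hp.2)
    have h21 : p.1 ∩ A2 = ∅ := by
      rw [← Finset.disjoint_iff_inter_eq_empty]
      exact (hdisj.mono_left hp.1)
    show ((p.1 ∪ p.2) ∩ A1, (p.1 ∪ p.2) ∩ A2) = p
    rw [Finset.union_inter_distrib_right, Finset.union_inter_distrib_right,
      h1, h2, h12, h21, Finset.union_empty, Finset.empty_union]
  · intro H hH
    rw [Finset.mem_powerset] at hH
    have hun : (H ∩ A1) ∪ (H ∩ A2) = H := by
      rw [← Finset.inter_union_distrib_left]
      exact Finset.inter_eq_left.mpr hH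
    calc fE H = fE ((H ∩ A1) ∪ (H ∩ A2)) := by rw [hun]
      _ = fE (H ∩ A1) * fE (H ∩ A2) :=
        key _ (Finset.mem_powerset.mpr Finset.inter_subset_right) _
          (Finset.mem_powerset.mpr Finset.inter_subset_right)
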